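/- The 1/2-spin representation π^{1/2} of so(2n+1, ℂ) on Λℂⁿ is irreducible: any subspace of Λℂⁿ invariant under π^{1/2}(so(2n+1, ℂ)) is either {0} or all of Λℂⁿ. -/

import Mathlib

noncomputable section

open scoped ComplexConjugate

/-- The fermionic Fock space `Γ_∧ℂⁿ`, realized concretely via the orthonormal basis
`e_S = e_{j_1} ∧ ⋯ ∧ e_{j_k}` indexed by subsets `S ⊆ {1,…,n}`. -/
abbrev Fock (n : ℕ) : Type := EuclideanSpace ℂ (Finset (Fin n))

/-- Sign `(-1)^{#{i ∈ S : i < j}}` arising from wedging `e_j` into `e_S`. -/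
def csign {n : ℕ} (j : Fin n) (S : Finset (Fin n)) : ℂ :=
  (-1 : ℂ) ^ ((S.filter fun i => i < j).card)

/-- The creation operator `c†_j = (e_j ∧ ·)` on the fermionic Fock space. -/
def creat {n : ℕ} (j : Fin n) : Module.End ℂ (Fock n) where
  toFun ψ := WithLp.toLp 2 (fun S : Finset (Fin n) =>
    if j ∈ S then csign j (S.erase j) * ψ (S.erase j) else 0)
  map_add' := by
    intro ψ φ; ext S; by_cases h : j ∈ S <;> simp [h] <;> ring
  map_smul' := by
    intro a ψ; ext S; by_cases h : j ∈ S <;> simp [h] <;> ring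

/-- The annihilation operator `c_j`, defined as the Hilbert adjoint of `c†_j`. -/
def annih {n : ℕ} (j : Fin n) : Module.End ℂ (Fock n) :=
  LinearMap.adjoint (creat j)

/-- The creation operator `c†(v) = (v ∧ ·)` for a general vector `v ∈ ℂⁿ`:
since `v = Σ_j v_j e_j`, wedging by `v` is `Σ_j v_j (e_j ∧ ·)`. -/
def creatV {n : ℕ} (v : Fin n → ℂ) : Module.End ℂ (Fock n) := ∑ j, v j • creat j

/-- The annihilation operator `c(v)`, the Hilbert adjoint of `c†(v)`. -/
def annihV {n : ℕ} (v : Fin n → ℂ) : Module.End ℂ (Fock n) :=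
  LinearMap.adjoint (creatV v)

/-- `e_{2j-1}` (1-based), i.e. index `2j` (0-based), in `ℂ^{2n}`. -/
def idxA {n : ℕ} (j : Fin n) : Fin (2*n) := ⟨2*(j : ℕ), by have := j.isLt; omega⟩

/-- `e_{2j}` (1-based), i.e. index `2j+1` (0-based), in `ℂ^{2n}`. -/
def idxB {n : ℕ} (j : Fin n) : Fin (2*n) := ⟨2*(j : ℕ)+1, by have := j.isLt; omega⟩

/-- The projection `P₁ : ℂ^{2n} → ℂⁿ`, `e_{2j-1} ↦ e_j`, `e_{2j} ↦ 0`. -/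
def P1 {n : ℕ} (v : Fin (2*n) → ℂ) : Fin n → ℂ := fun j => v (idxA j)

/-- The projection `P₂ : ℂ^{2n} → ℂⁿ`, `e_{2j} ↦ e_j`, `e_{2j-1} ↦ 0`. -/
def P2 {n : ℕ} (v : Fin (2*n) → ℂ) : Fin n → ℂ := fun j => v (idxB j)

/-- The Fock representation `γ(v) = c†(P₁v) − c(conj(P₁v)) − i(c†(P₂v) + c(conj(P₂v)))`. -/
def gam {n : ℕ} (v : Fin (2*n) → ℂ) : Module.End ℂ (Fock n) :=
  creatV (P1 v) - annihV (fun j => conj (P1 v j))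
    - Complex.I • (creatV (P2 v) + annihV (fun j => conj (P2 v j)))

/-- `γ_j = γ(e_j)` for the standard basis of `ℂ^{2n}`. -/
def gamB {n : ℕ} (j : Fin (2*n)) : Module.End ℂ (Fock n) := gam (Pi.single j 1)


variable {n : ℕ}

lemma csign_conj (j : Fin n) (S : Finset (Fin n)) : conj (csign j S) = csign j S := by
  simp [csign]

lemma csign_sq (j : Fin n) (S : Finset (Fin n)) : csign j S * csign j S = 1 := by
  rw [csign, ← pow_add, ← two_mul, pow_mul]
  norm_num

lemma csign_ne_zero (j : Fin n) (S : Finset (Fin n)) : csign j S ≠ 0 := by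
  simp [csign]

lemma creat_apply (j : Fin n) (ψ : Fock n) (S : Finset (Fin n)) :
    creat j ψ S = if j ∈ S then csign j (S.erase j) * ψ (S.erase j) else 0 := rfl

def toggle (j : Fin n) (S : Finset (Fin n)) : Finset (Fin n) :=
  if j ∈ S then S.erase j else insert j S

lemma toggle_invol (j : Fin n) : Function.Involutive (toggle j) := by
  intro S
  by_cases h : j ∈ S
  · simp [toggle, h, Finset.notMem_erase, Finset.insert_erase h]
  · simp [toggle, h, Finset.mem_insert_self, Finset.erase_insert h]

lemma annih_apply (j : Fin n) (ψ : Fock n) (T : Finset (Fin n)) :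
    annih j ψ T = if j ∈ T then 0 else csign j T * ψ (insert j T) := by
  have key : annih j = {
      toFun := fun ψ => WithLp.toLp 2 (fun T => if j ∈ T then 0 else csign j T * ψ (insert j T))
      map_add' := by intro ψ φ; ext T; by_cases h : j ∈ T <;> simp [h] <;> ring
      map_smul' := by intro a ψ; ext T; by_cases h : j ∈ T <;> simp [h] <;> ring
      : Module.End ℂ (Fock n) } := by
    rw [annih]
    symm
    refine (LinearMap.eq_adjoint_iff _ _).mpr fun x y => ?_
    simp only [PiLp.inner_apply, RCLike.inner_apply', LinearMap.coe_mk, AddHom.coe_mk,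
      creat_apply]
    rw [← Equiv.sum_comp ((toggle_invol j).toPerm) (g := fun S => conj (x S) * _)]
    refine Finset.sum_congr rfl fun T _ => ?_
    by_cases h : j ∈ T
    · have h2 : j ∉ toggle j T := by simp [toggle, h]
      simp [toggle, h, h2, Function.Involutive.coe_toPerm]
    · simp only [Function.Involutive.coe_toPerm, toggle, if_neg h,
        if_pos (Finset.mem_insert_self j T), Finset.erase_insert h, map_mul, csign_conj]
      ring
  rw [key]; rfl

lemma creat_annih_apply (j : Fin n) (ψ : Fock n) (T : Finset (Fin n)) :
    creat j (annih j ψ) T = if j ∈ T then ψ T else 0 := by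
  rw [creat_apply]
  by_cases h : j ∈ T
  · rw [if_pos h, if_pos h, annih_apply, if_neg (Finset.notMem_erase j T),
      Finset.insert_erase h, ← mul_assoc, csign_sq, one_mul]
  · rw [if_neg h, if_neg h]

lemma annih_creat_apply (j : Fin n) (ψ : Fock n) (T : Finset (Fin n)) :
    annih j (creat j ψ) T = if j ∈ T then 0 else ψ T := by
  rw [annih_apply]
  by_cases h : j ∈ T
  · rw [if_pos h, if_pos h]
  · rw [if_neg h, if_neg h, creat_apply, if_pos (Finset.mem_insert_self j T),
      Finset.erase_insert h, ← mul_assoc, csign_sq, one_mul]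


lemma P1_singleA (j : Fin n) : P1 (Pi.single (idxA j) 1) = Pi.single j (1:ℂ) := by
  funext k
  simp only [P1, Pi.single_apply]
  by_cases h : k = j
  · simp [h]
  · rw [if_neg h, if_neg]
    intro hk
    exact h (Fin.ext (by simpa [idxA, Fin.ext_iff] using congrArg Fin.val hk))

lemma P2_singleA (j : Fin n) : P2 (Pi.single (idxA j) 1) = 0 := by
  funext k
  simp only [P2, Pi.single_apply, Pi.zero_apply]
  rw [if_neg]
  intro hk
  have := congrArg Fin.val hk
  simp [idxA, idxB] at this
  omega

lemma P1_singleB (j : Fin n) : P1 (Pi.single (idxB j) 1) = 0 := by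
  funext k
  simp only [P1, Pi.single_apply, Pi.zero_apply]
  rw [if_neg]
  intro hk
  have := congrArg Fin.val hk
  simp [idxA, idxB] at this
  omega

lemma P2_singleB (j : Fin n) : P2 (Pi.single (idxB j) 1) = Pi.single j (1:ℂ) := by
  funext k
  simp only [P2, Pi.single_apply]
  by_cases h : k = j
  · simp [h]
  · rw [if_neg h, if_neg]
    intro hk
    exact h (Fin.ext (by simpa [idxB, Fin.ext_iff] using congrArg Fin.val hk))

lemma conj_single (j : Fin n) : (fun k => conj ((Pi.single j 1 : Fin n → ℂ) k)) = Pi.single j (1:ℂ) := by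
  funext k
  by_cases h : k = j <;> simp [Pi.single_apply, h]

lemma creatV_single (j : Fin n) : creatV (Pi.single j (1:ℂ)) = creat j := by
  rw [creatV]
  rw [Finset.sum_eq_single j]
  · simp
  · intro b _ hb; simp [Pi.single_apply, hb]
  · simp

lemma creatV_zero : creatV (0 : Fin n → ℂ) = 0 := by simp [creatV]

lemma annihV_single (j : Fin n) : annihV (Pi.single j (1:ℂ)) = annih j := by
  rw [annihV, creatV_single, annih]

lemma annihV_zero : annihV (0 : Fin n → ℂ) = 0 := by
  rw [annihV, creatV_zero]; exact map_zero LinearMap.adjoint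

lemma conj_zero_fun : (fun k : Fin n => conj ((0 : Fin n → ℂ) k)) = 0 := by
  funext k; simp

lemma gamB_idxA (j : Fin n) : gamB (idxA j) = creat j - annih j := by
  rw [gamB, gam, P1_singleA, P2_singleA, conj_zero_fun, conj_single, creatV_single,
    creatV_zero, annihV_single, annihV_zero]
  simp

lemma gamB_idxB (j : Fin n) : gamB (idxB j) = -Complex.I • (creat j + annih j) := by
  rw [gamB, gam, P1_singleB, P2_singleB, conj_zero_fun, conj_single, creatV_single,
    creatV_zero, annihV_single, annihV_zero]
  simp only [neg_smul, smul_add]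
  abel

def eSet {n : ℕ} (S : Finset (Fin n)) : Fock n := WithLp.toLp 2 (fun T => if T = S then (1:ℂ) else 0)

lemma eSet_apply (S T : Finset (Fin n)) : eSet S T = if T = S then 1 else 0 := rfl

lemma annih_eSet {a : Fin n} {S : Finset (Fin n)} (ha : a ∉ S) :
    annih a (eSet (insert a S)) = csign a S • eSet S := by
  ext T
  simp only [annih_apply, PiLp.smul_apply, eSet_apply, smul_eq_mul]
  by_cases hT : T = S
  · subst hT
    rw [if_neg ha, if_pos rfl, if_pos rfl]
  · rw [if_neg hT, mul_zero]
    by_cases haT : a ∈ T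
    · rw [if_pos haT]
    · rw [if_neg haT, if_neg, mul_zero]
      intro h
      exact hT (by rw [← Finset.erase_insert haT, h, Finset.erase_insert ha])

lemma creat_eSet {a : Fin n} {S : Finset (Fin n)} (ha : a ∉ S) :
    creat a (eSet S) = csign a S • eSet (insert a S) := by
  ext T
  simp only [creat_apply, PiLp.smul_apply, eSet_apply, smul_eq_mul]
  by_cases hT : T = insert a S
  · subst hT
    rw [if_pos (Finset.mem_insert_self a S), if_pos rfl,
      Finset.erase_insert ha, if_pos rfl]
  · rw [if_neg hT, mul_zero]
    by_cases haT : a ∈ T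
    · rw [if_pos haT, if_neg, mul_zero]
      intro h
      exact hT (by rw [← Finset.insert_erase haT, h])
    · rw [if_neg haT]

lemma eSet_eq_single (S : Finset (Fin n)) : eSet S = EuclideanSpace.single S (1:ℂ) := by
  ext T
  rw [eSet_apply, EuclideanSpace.single_apply]


/-- the 1/2-spin representation of `so(2n+1, ℂ)` on `Λℂⁿ`, determined by
`π^{1/2}(X_{ℓ,2n+1}) = ½γ_ℓ` and `π^{1/2}(X_{jℓ}) = ½γ_jγ_ℓ`, is irreducible: any
invariant subspace is `{0}` or everything. -/
theorem half_spin_irreducible (n : ℕ) (p : Submodule ℂ (Fock n))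
    (h1 : ∀ ℓ : Fin (2*n), ∀ x ∈ p, ((1/2 : ℂ) • gamB ℓ) x ∈ p)
    (h2 : ∀ j ℓ : Fin (2*n), j < ℓ → ∀ x ∈ p, ((1/2 : ℂ) • (gamB j * gamB ℓ)) x ∈ p) :
    p = ⊥ ∨ p = ⊤ := by
  by_cases hbot : p = ⊥
  · exact Or.inl hbot
  right
  -- Step 1: p is invariant under all creation and annihilation operators.
  have hc : ∀ (j : Fin n), ∀ x ∈ p, creat j x ∈ p ∧ annih j x ∈ p := by
    intro j x hx
    have hA := h1 (idxA j) x hx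
    have hB := h1 (idxB j) x hx
    rw [gamB_idxA] at hA
    rw [gamB_idxB] at hB
    have hA' : creat j x - annih j x ∈ p := by
      have h := p.smul_mem (2 : ℂ) hA
      have e : (2:ℂ) • (((1/2 : ℂ) • (creat j - annih j)) x) = creat j x - annih j x := by
        simp only [LinearMap.smul_apply, LinearMap.sub_apply, smul_smul]
        norm_num
      rwa [e] at h
    have hB' : creat j x + annih j x ∈ p := by
      have h := p.smul_mem (2 * Complex.I : ℂ) hB
      have e : (2 * Complex.I : ℂ) • (((1/2 : ℂ) • (-Complex.I • (creat j + annih j))) x)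
          = creat j x + annih j x := by
        simp only [LinearMap.smul_apply, LinearMap.add_apply, smul_smul]
        have : (2 * Complex.I : ℂ) * ((1/2) * -Complex.I) = 1 := by
          have := Complex.I_mul_I
          ring_nf
          rw [Complex.I_sq]
          norm_num
        rw [this, one_smul]
      rwa [e] at h
    constructor
    · have h := p.smul_mem ((1/2 : ℂ)) (p.add_mem hA' hB')
      have e : (1/2 : ℂ) • ((creat j x - annih j x) + (creat j x + annih j x)) = creat j x := by
        rw [sub_add_add_cancel, ← two_smul ℂ, smul_smul]
        norm_num
      rwa [e] at h
    · have h := p.smul_mem ((1/2 : ℂ)) (p.sub_mem hB' hA')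
      have e : (1/2 : ℂ) • ((creat j x + annih j x) - (creat j x - annih j x)) = annih j x := by
        rw [add_sub_sub_cancel, ← two_smul ℂ, smul_smul]
        norm_num
      rwa [e] at h
  -- Step 2: p is invariant under the diagonal projections, so it contains the
  -- "component at S" of each of its elements.
  have proj : ∀ (L : List (Fin n)) (S : Finset (Fin n)) (ψ : Fock n), ψ ∈ p →
      (WithLp.toLp 2 (fun T => if ∀ j ∈ L, (j ∈ T ↔ j ∈ S) then ψ T else 0) : Fock n) ∈ p := by
    intro L
    induction L with
    | nil =>
      intro S ψ hψ
      have e : (WithLp.toLp 2 (fun T => if ∀ j ∈ ([] : List (Fin n)), (j ∈ T ↔ j ∈ S) then ψ T else 0) :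
          Fock n) = ψ := by
        ext T
        simp
      rwa [e]
    | cons j L ih =>
      intro S ψ hψ
      have hφ := ih S ψ hψ
      set Φ : Fock n := WithLp.toLp 2 (fun T => if ∀ k ∈ L, (k ∈ T ↔ k ∈ S) then ψ T else 0) with hΦ
      by_cases hj : j ∈ S
      · have hm : creat j (annih j Φ) ∈ p := (hc j _ ((hc j Φ hφ).2)).1
        have e : (WithLp.toLp 2 (fun T => if ∀ k ∈ j :: L, (k ∈ T ↔ k ∈ S) then ψ T else 0) : Fock n)
            = creat j (annih j Φ) := by
          ext T
          rw [PiLp.toLp_apply, creat_annih_apply]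
          by_cases hT : j ∈ T
          · simp only [if_pos hT, hΦ, List.forall_mem_cons, hT, hj, true_iff, true_and, if_true]
          · simp only [if_neg hT, hΦ, List.forall_mem_cons, hT, hj, false_iff,
              not_true, false_and, if_false]
        rw [e]; exact hm
      · have hm : annih j (creat j Φ) ∈ p := (hc j _ ((hc j Φ hφ).1)).2
        have e : (WithLp.toLp 2 (fun T => if ∀ k ∈ j :: L, (k ∈ T ↔ k ∈ S) then ψ T else 0) : Fock n)
            = annih j (creat j Φ) := by
          ext T
          rw [PiLp.toLp_apply, annih_creat_apply]
          by_cases hT : j ∈ T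
          · simp only [if_pos hT, hΦ, List.forall_mem_cons, hT, hj, true_iff,
              not_false_iff, false_and, if_false]
            simp [hj]
          · simp only [if_neg hT, hΦ, List.forall_mem_cons, hT, hj, false_iff, true_and]
            simp [hj]
        rw [e]; exact hm
  have sing : ∀ (S : Finset (Fin n)) (ψ : Fock n), ψ ∈ p →
      (WithLp.toLp 2 (fun T => if T = S then ψ T else 0) : Fock n) ∈ p := by
    intro S ψ hψ
    have h := proj (List.finRange n) S ψ hψ
    have e : (WithLp.toLp 2 (fun T => if ∀ j ∈ List.finRange n, (j ∈ T ↔ j ∈ S) then ψ T else 0) : Fock n)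
        = WithLp.toLp 2 (fun T => if T = S then ψ T else 0) := by
      ext T
      simp only [PiLp.toLp_apply]
      by_cases hT : T = S
      · subst hT; simp
      · rw [if_neg hT, if_neg]
        intro hall
        exact hT (Finset.ext fun j => hall j (List.mem_finRange j))
    rwa [e] at h
  -- Step 3: p contains some basis vector eSet S₀.
  obtain ⟨ψ, hψp, hψ0⟩ := (Submodule.ne_bot_iff p).mp hbot
  have hex : ∃ S, ψ S ≠ 0 := by
    by_contra h
    push_neg at h
    exact hψ0 (by ext S; simpa using h S)
  obtain ⟨S₀, hS₀⟩ := hex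
  have hE₀ : eSet S₀ ∈ p := by
    have h := p.smul_mem ((ψ S₀)⁻¹) (sing S₀ ψ hψp)
    have e : (ψ S₀)⁻¹ • (WithLp.toLp 2 (fun T => if T = S₀ then ψ T else 0) : Fock n) = eSet S₀ := by
      ext T
      have hsa : ((ψ S₀)⁻¹ • (WithLp.toLp 2 (fun T => if T = S₀ then ψ T else 0) : Fock n)) T
          = (ψ S₀)⁻¹ * (if T = S₀ then ψ T else 0) := rfl
      rw [hsa, eSet_apply]
      by_cases hT : T = S₀
      · subst hT; rw [if_pos rfl, if_pos rfl, inv_mul_cancel₀ hS₀]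
      · rw [if_neg hT, if_neg hT, mul_zero]
    rwa [e] at h
  -- Step 4: descend to the vacuum.
  have down : ∀ (S : Finset (Fin n)), eSet S ∈ p → eSet (∅ : Finset (Fin n)) ∈ p := by
    intro S
    induction S using Finset.induction_on with
    | empty => exact id
    | @insert a S ha ih =>
      intro h
      apply ih
      have hm := (hc a _ h).2
      rw [annih_eSet ha] at hm
      have h2 := p.smul_mem ((csign a S)⁻¹) hm
      rwa [smul_smul, inv_mul_cancel₀ (csign_ne_zero a S), one_smul] at h2
  -- Step 5: ascend to every basis vector.
  have up : ∀ (S : Finset (Fin n)), eSet S ∈ p := by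
    intro S
    induction S using Finset.induction_on with
    | empty => exact down S₀ hE₀
    | @insert a S ha ih =>
      have hm := (hc a _ ih).1
      rw [creat_eSet ha] at hm
      have h2 := p.smul_mem ((csign a S)⁻¹) hm
      rwa [smul_smul, inv_mul_cancel₀ (csign_ne_zero a S), one_smul] at h2
  -- Step 6: the basis vectors span, so p = ⊤.
  rw [Submodule.eq_top_iff']
  intro x
  have hrepr := (EuclideanSpace.basisFun (Finset (Fin n)) ℂ).sum_repr x
  rw [← hrepr]
  refine Submodule.sum_mem p fun S _ => Submodule.smul_mem p _ ?_
  rw [EuclideanSpace.basisFun_apply, ← eSet_eq_single]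
  exact up S
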